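/- Let S be the decomposable operator on L²(X,μ;H) with measurable field T. Then S is a normal operator (i.e. S*S = SS*, IsStarNormal S) if and only if T(ζ) is a normal operator on H for μ-almost every ζ ∈ X. -/

import Mathlib

open MeasureTheory

/-- `T` is a measurable field of bounded operators: pointwise measurable and
essentially bounded in operator norm. -/
def MeasurableFieldOfOperators {X : Type*} [MeasurableSpace X]
    {H : Type*} [NormedAddCommGroup H] [InnerProductSpace ℂ H]
    [MeasurableSpace H] [BorelSpace H]
    (μ : Measure X) (T : X → H →L[ℂ] H) : Prop :=
  (∀ x : H, Measurable fun ζ => T ζ x) ∧ ∃ C : ℝ, ∀ᵐ ζ ∂μ, ‖T ζ‖ ≤ C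

/-- `S` is the decomposable operator on `L²(X, μ; H)` with field `T`. -/
def IsDecomposableOperatorWith {X : Type*} [MeasurableSpace X]
    {H : Type*} [NormedAddCommGroup H] [InnerProductSpace ℂ H]
    (μ : Measure X) (S : Lp H 2 μ →L[ℂ] Lp H 2 μ) (T : X → H →L[ℂ] H) : Prop :=
  ∀ f : Lp H 2 μ, ∀ᵐ ζ ∂μ, (S f : X → H) ζ = T ζ ((f : X → H) ζ)

open scoped InnerProductSpace ENNReal

section Aux

variable {X : Type*} [MeasurableSpace X]
    {μ : Measure X} [SigmaFinite μ]
    {H : Type*} [NormedAddCommGroup H] [InnerProductSpace ℂ H]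
    [CompleteSpace H] [SecondCountableTopology H] [MeasurableSpace H] [BorelSpace H]

/-- The set-integral identity coming from testing `S` against indicator functions. -/
theorem aux_setIntegral_eq (T : X → H →L[ℂ] H)
    (S : Lp H 2 μ →L[ℂ] Lp H 2 μ) (hS : IsDecomposableOperatorWith μ S T)
    (g : Lp H 2 μ) (x : H) {s : Set X} (hs : MeasurableSet s) (hμs : μ s < ∞) :
    ∫ ζ in s, ⟪T ζ x, (g : X → H) ζ⟫_ℂ ∂μ
      = ∫ ζ in s, ⟪x, ((ContinuousLinearMap.adjoint S g : Lp H 2 μ) : X → H) ζ⟫_ℂ ∂μ := by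
  set f : Lp H 2 μ := indicatorConstLp 2 hs hμs.ne x with hf
  set g' : Lp H 2 μ := ContinuousLinearMap.adjoint S g with hg'
  have h1 : ⟪f, g'⟫_ℂ = ⟪S f, g⟫_ℂ := ContinuousLinearMap.adjoint_inner_right S f g
  have hfind : (f : X → H) =ᵐ[μ] s.indicator fun _ => x := indicatorConstLp_coeFn
  have hSf := hS f
  have hLHS : ⟪S f, g⟫_ℂ = ∫ ζ in s, ⟪T ζ x, (g : X → H) ζ⟫_ℂ ∂μ := by
    rw [L2.inner_def]
    rw [← integral_indicator hs]
    refine integral_congr_ae ?_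
    filter_upwards [hSf, hfind] with ζ h1 h2
    rw [h1, h2]
    by_cases hζ : ζ ∈ s
    · simp [Set.indicator_of_mem hζ]
    · simp [Set.indicator_of_notMem hζ]
  have hRHS : ⟪f, g'⟫_ℂ = ∫ ζ in s, ⟪x, (g' : X → H) ζ⟫_ℂ ∂μ := by
    rw [L2.inner_def]
    rw [← integral_indicator hs]
    refine integral_congr_ae ?_
    filter_upwards [hfind] with ζ h2
    rw [h2]
    by_cases hζ : ζ ∈ s
    · simp [Set.indicator_of_mem hζ]
    · simp [Set.indicator_of_notMem hζ]
  rw [← hLHS, ← h1, hRHS]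

/-- On finite-measure sets, the relevant scalar functions are integrable. -/
theorem aux_integrableOn (T : X → H →L[ℂ] H) (hT : MeasurableFieldOfOperators μ T)
    (g : Lp H 2 μ) (x : H) {s : Set X} (hs : MeasurableSet s) (hμs : μ s < ∞) :
    IntegrableOn (fun ζ => ⟪T ζ x, (g : X → H) ζ⟫_ℂ) s μ := by
  obtain ⟨hmeas, C, hC⟩ := hT
  haveI := Fact.mk hμs
  have hg1 : Integrable (g : X → H) (μ.restrict s) :=
    memLp_one_iff_integrable.mp (((Lp.memLp g).restrict s).mono_exponent (by norm_num))
  have hsm : AEStronglyMeasurable (fun ζ => ⟪T ζ x, (g : X → H) ζ⟫_ℂ) (μ.restrict s) :=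
    AEStronglyMeasurable.inner ((hmeas x).aestronglyMeasurable.restrict)
      ((Lp.aestronglyMeasurable g).restrict)
  refine Integrable.mono' ((hg1.norm).const_mul ((max C 0) * ‖x‖)) hsm ?_
  filter_upwards [ae_restrict_of_ae hC] with ζ hζ
  calc ‖⟪T ζ x, (g : X → H) ζ⟫_ℂ‖ ≤ ‖T ζ x‖ * ‖(g : X → H) ζ‖ := norm_inner_le_norm _ _
    _ ≤ (‖T ζ‖ * ‖x‖) * ‖(g : X → H) ζ‖ := by
        gcongr; exact (T ζ).le_opNorm x
    _ ≤ ((max C 0) * ‖x‖) * ‖(g : X → H) ζ‖ := by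
        gcongr; exact le_max_of_le_left hζ

theorem aux_integrableOn' (g : Lp H 2 μ) (x : H) {s : Set X}
    (hs : MeasurableSet s) (hμs : μ s < ∞) :
    IntegrableOn (fun ζ => ⟪x, (g : X → H) ζ⟫_ℂ) s μ := by
  haveI := Fact.mk hμs
  have hg1 : Integrable (g : X → H) (μ.restrict s) :=
    memLp_one_iff_integrable.mp (((Lp.memLp g).restrict s).mono_exponent (by norm_num))
  have hsm : AEStronglyMeasurable (fun ζ => ⟪x, (g : X → H) ζ⟫_ℂ) (μ.restrict s) :=
    AEStronglyMeasurable.inner aestronglyMeasurable_const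
      ((Lp.aestronglyMeasurable g).restrict)
  refine Integrable.mono' ((hg1.norm).const_mul ‖x‖) hsm ?_
  filter_upwards with ζ
  exact (norm_inner_le_norm _ _)

/-- Key lemma: the adjoint of a decomposable operator is decomposable with
the pointwise adjoint field. -/
theorem aux_adjoint_decomposable (T : X → H →L[ℂ] H) (hT : MeasurableFieldOfOperators μ T)
    (S : Lp H 2 μ →L[ℂ] Lp H 2 μ) (hS : IsDecomposableOperatorWith μ S T)
    (g : Lp H 2 μ) :
    ∀ᵐ ζ ∂μ, ((ContinuousLinearMap.adjoint S g : Lp H 2 μ) : X → H) ζ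
      = ContinuousLinearMap.adjoint (T ζ) ((g : X → H) ζ) := by
  haveI : Nonempty H := ⟨0⟩
  set g' : Lp H 2 μ := ContinuousLinearMap.adjoint S g with hg'
  have key : ∀ x : H, ∀ᵐ ζ ∂μ, ⟪T ζ x, (g : X → H) ζ⟫_ℂ = ⟪x, (g' : X → H) ζ⟫_ℂ := by
    intro x
    refine ae_eq_of_forall_setIntegral_eq_of_sigmaFinite
      (fun s hs hμs => aux_integrableOn T hT g x hs hμs)
      (fun s hs hμs => aux_integrableOn' g' x hs hμs)
      (fun s hs hμs => aux_setIntegral_eq T S hS g x hs hμs)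
  set u : ℕ → H := TopologicalSpace.denseSeq H with hu
  have hdense : DenseRange u := TopologicalSpace.denseRange_denseSeq H
  have hall : ∀ᵐ ζ ∂μ, ∀ n, ⟪T ζ (u n), (g : X → H) ζ⟫_ℂ = ⟪u n, (g' : X → H) ζ⟫_ℂ :=
    ae_all_iff.mpr fun n => key (u n)
  filter_upwards [hall] with ζ hζ
  refine (ext_inner_left ℂ fun v => ?_).symm
  have hfun : (fun y : H => ⟪y, (g' : X → H) ζ⟫_ℂ)
      = fun y : H => ⟪y, ContinuousLinearMap.adjoint (T ζ) ((g : X → H) ζ)⟫_ℂ := by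
    refine Continuous.ext_on hdense ?_ ?_ ?_
    · exact continuous_id.inner continuous_const
    · exact continuous_id.inner continuous_const
    · rintro _ ⟨n, rfl⟩
      show ⟪u n, (g' : X → H) ζ⟫_ℂ
          = ⟪u n, ContinuousLinearMap.adjoint (T ζ) ((g : X → H) ζ)⟫_ℂ
      rw [ContinuousLinearMap.adjoint_inner_right]
      exact (hζ n).symm
  exact (congrFun hfun v).symm

end Aux

theorem isStarNormal_of_decomposable_iff
    {X : Type*} [MeasurableSpace X] [StandardBorelSpace X]
    {μ : Measure X} [SigmaFinite μ]
    {H : Type*} [NormedAddCommGroup H] [InnerProductSpace ℂ H]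
    [CompleteSpace H] [SecondCountableTopology H] [MeasurableSpace H] [BorelSpace H]
    (T : X → H →L[ℂ] H) (hT : MeasurableFieldOfOperators μ T)
    (S : Lp H 2 μ →L[ℂ] Lp H 2 μ) (hS : IsDecomposableOperatorWith μ S T) :
    IsStarNormal S ↔ ∀ᵐ ζ ∂μ, IsStarNormal (T ζ) := by
  haveI : Nonempty H := ⟨0⟩
  set u : ℕ → H := TopologicalSpace.denseSeq H with hu
  have hdense : DenseRange u := TopologicalSpace.denseRange_denseSeq H
  have hadj := aux_adjoint_decomposable T hT S hS
  constructor
  · intro hN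
    have hcomm : ContinuousLinearMap.adjoint S * S = S * ContinuousLinearMap.adjoint S := by
      rw [← ContinuousLinearMap.star_eq_adjoint]
      exact hN.star_comm_self
    -- for each pair (n, m) : on the m-th spanning set, the commutation holds at u n
    have key : ∀ n m : ℕ, ∀ᵐ ζ ∂μ, ζ ∈ spanningSets μ m →
        ContinuousLinearMap.adjoint (T ζ) (T ζ (u n)) =
          T ζ (ContinuousLinearMap.adjoint (T ζ) (u n)) := by
      intro n m
      have hsm : MeasurableSet (spanningSets μ m) := measurableSet_spanningSets μ m
      have hμm : μ (spanningSets μ m) < ∞ := measure_spanningSets_lt_top μ m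
      set f : Lp H 2 μ := indicatorConstLp 2 hsm hμm.ne (u n) with hf
      have hfind : (f : X → H) =ᵐ[μ] (spanningSets μ m).indicator fun _ => u n :=
        indicatorConstLp_coeFn
      have hmul : ContinuousLinearMap.adjoint S (S f) = S (ContinuousLinearMap.adjoint S f) :=
        congrFun (congrArg DFunLike.coe hcomm) f
      filter_upwards [hS f, hadj (S f), hS (ContinuousLinearMap.adjoint S f), hadj f, hfind]
        with ζ h1 h2 h3 h4 h5 hζs
      have e1 : ((ContinuousLinearMap.adjoint S (S f) : Lp H 2 μ) : X → H) ζ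
          = ContinuousLinearMap.adjoint (T ζ) (T ζ ((f : X → H) ζ)) := by rw [h2, h1]
      have e2 : ((S (ContinuousLinearMap.adjoint S f) : Lp H 2 μ) : X → H) ζ
          = T ζ (ContinuousLinearMap.adjoint (T ζ) ((f : X → H) ζ)) := by rw [h3, h4]
      rw [hmul] at e1
      rw [h5, Set.indicator_of_mem hζs] at e1 e2
      rw [← e1, ← e2]
    have key' : ∀ᵐ ζ ∂μ, ∀ n m : ℕ, ζ ∈ spanningSets μ m →
        ContinuousLinearMap.adjoint (T ζ) (T ζ (u n)) =
          T ζ (ContinuousLinearMap.adjoint (T ζ) (u n)) :=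
      ae_all_iff.mpr fun n => ae_all_iff.mpr fun m => key n m
    filter_upwards [key'] with ζ hζ
    obtain ⟨m, hm⟩ : ∃ m, ζ ∈ spanningSets μ m := by
      have := iUnion_spanningSets μ
      have : ζ ∈ ⋃ i, spanningSets μ i := by rw [this]; trivial
      exact Set.mem_iUnion.mp this
    refine ⟨?_⟩
    rw [commute_iff_eq, ContinuousLinearMap.star_eq_adjoint]
    have hfun : (fun y : H => ContinuousLinearMap.adjoint (T ζ) (T ζ y))
        = fun y : H => T ζ (ContinuousLinearMap.adjoint (T ζ) y) := by
      refine Continuous.ext_on hdense ?_ ?_ ?_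
      · exact (ContinuousLinearMap.adjoint (T ζ)).continuous.comp (T ζ).continuous
      · exact (T ζ).continuous.comp (ContinuousLinearMap.adjoint (T ζ)).continuous
      · rintro _ ⟨n, rfl⟩
        exact hζ n m hm
    refine ContinuousLinearMap.ext fun y => ?_
    simpa [ContinuousLinearMap.mul_apply] using congrFun hfun y
  · intro hae
    refine ⟨?_⟩
    rw [commute_iff_eq, ContinuousLinearMap.star_eq_adjoint]
    refine ContinuousLinearMap.ext fun f => Lp.ext ?_
    filter_upwards [hS f, hadj (S f), hS (ContinuousLinearMap.adjoint S f), hadj f, hae]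
      with ζ h1 h2 h3 h4 h5
    have e1 : ((ContinuousLinearMap.adjoint S (S f) : Lp H 2 μ) : X → H) ζ
        = ContinuousLinearMap.adjoint (T ζ) (T ζ ((f : X → H) ζ)) := by rw [h2, h1]
    have e2 : ((S (ContinuousLinearMap.adjoint S f) : Lp H 2 μ) : X → H) ζ
        = T ζ (ContinuousLinearMap.adjoint (T ζ) ((f : X → H) ζ)) := by rw [h3, h4]
    have hcz : ContinuousLinearMap.adjoint (T ζ) (T ζ ((f : X → H) ζ))
        = T ζ (ContinuousLinearMap.adjoint (T ζ) ((f : X → H) ζ)) := by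
      have := h5.star_comm_self
      rw [commute_iff_eq, ContinuousLinearMap.star_eq_adjoint] at this
      have := congrFun (congrArg DFunLike.coe this) ((f : X → H) ζ)
      simpa [ContinuousLinearMap.mul_apply] using this
    show ((ContinuousLinearMap.adjoint S * S) f : X → H) ζ
        = ((S * ContinuousLinearMap.adjoint S) f : X → H) ζ
    simp only [ContinuousLinearMap.mul_apply]
    rw [e1, e2, hcz]
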